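/- If every entry of a Q×Q matrix Φ of formulas φ_{p,q}(x̄,ȳ) is expressible in first-order logic with k-ary transitive closure (FO+TC^k), then every entry of its computation closure Φ^# is also expressible in FO+TC^k. -/

import Mathlib

namespace NestedPebbles

/-- Trees over a ranked alphabet `(Sig, rank)`: terms `σ(t₁,…,tₙ)` with `rank σ = n`. -/
inductive RTree (Sig : Type) (rank : Sig → ℕ) : Type
  | node (a : Sig) (children : Fin (rank a) → RTree Sig rank) : RTree Sig rank

namespace RTree

variable {Sig : Type} {rank : Sig → ℕ}

/-- The label of the root symbol. -/
def label : RTree Sig rank → Sig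
  | node a _ => a

/-- The `i`-th (0-based) immediate subtree, if it exists. -/
def child : RTree Sig rank → ℕ → Option (RTree Sig rank)
  | node a c, i => if h : i < rank a then some (c ⟨i, h⟩) else none

/-- The subtree at a position (a list of 0-based child indices, read from the root). -/
def subtree : RTree Sig rank → List ℕ → Option (RTree Sig rank)
  | t, [] => some t
  | t, i :: p => (t.child i).bind fun s => s.subtree p

end RTree

variable {Sig : Type} {rank : Sig → ℕ}

/-- `p` is (the address of) a node of `t`. -/
def IsPos (t : RTree Sig rank) (p : List ℕ) : Prop := (t.subtree p).isSome = true

/-- The type of nodes of a tree `t`, as valid positions. -/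
def Pos (t : RTree Sig rank) : Type := { p : List ℕ // IsPos t p }

/-- The root node. -/
def rootPos (t : RTree Sig rank) : Pos t := ⟨[], rfl⟩

/-- The label of the node of `t` at position `p`. -/
def labelAt (t : RTree Sig rank) (p : List ℕ) : Option Sig := (t.subtree p).map RTree.label

/-- The child number of a node: `0` for the root, and `j` for a `j`-th child (1-based). -/
def childNo (p : List ℕ) : ℕ :=
  match p.getLast? with
  | none => 0
  | some j => j + 1

/-!  ### First-order logic with k-ary transitive closure, on trees  -/

/-- First-order formulas over a ranked alphabet, with a `k`-ary transitive closure
operator.  Variables are natural numbers.  `lab a x` means `x` has label `a`;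
`edg i x y` means `y` is the `i`-th child of `x` (`i` is 1-based);
`le x y` means `x` is an ancestor of `y`; `tc xs ys φ us vs` is the transitive
closure `φ*` of `φ` with respect to the tuples of variables `xs`, `ys` (which it
binds), applied to the tuples of variables `us`, `vs`. -/
inductive TForm (Sig : Type) (rank : Sig → ℕ) (k : ℕ) : Type
  | lab (a : Sig) (x : ℕ)
  | edg (i : ℕ) (x y : ℕ)
  | le (x y : ℕ)
  | eq (x y : ℕ)
  | not (φ : TForm Sig rank k)
  | and (φ ψ : TForm Sig rank k)
  | or (φ ψ : TForm Sig rank k)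
  | ex (x : ℕ) (φ : TForm Sig rank k)
  | all (x : ℕ) (φ : TForm Sig rank k)
  | tc (xs ys : Fin k → ℕ) (φ : TForm Sig rank k) (us vs : Fin k → ℕ)

/-- Update a valuation on a tuple of variables simultaneously. -/
noncomputable def updVec {α : Type} {k : ℕ} (ν : ℕ → α) (xs : Fin k → ℕ) (a : Fin k → α) :
    ℕ → α :=
  fun n => if h : ∃ i, xs i = n then a h.choose else ν n

/-- Satisfaction of a formula in a tree `t` under a valuation of the variables by
nodes of `t`. -/
def Sat {k : ℕ} (t : RTree Sig rank) : TForm Sig rank k → (ℕ → Pos t) → Prop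
  | .lab a x, ν => labelAt t (ν x).1 = some a
  | .edg i x y, ν => 1 ≤ i ∧ (ν y).1 = (ν x).1 ++ [i - 1]
  | .le x y, ν => (ν x).1 <+: (ν y).1
  | .eq x y, ν => ν x = ν y
  | .not φ, ν => ¬ Sat t φ ν
  | .and φ ψ, ν => Sat t φ ν ∧ Sat t ψ ν
  | .or φ ψ, ν => Sat t φ ν ∨ Sat t ψ ν
  | .ex x φ, ν => ∃ u : Pos t, Sat t φ (Function.update ν x u)
  | .all x φ, ν => ∀ u : Pos t, Sat t φ (Function.update ν x u)
  | .tc xs ys φ us vs, ν =>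
      Relation.ReflTransGen
        (fun a b : Fin k → Pos t => Sat t φ (updVec (updVec ν xs a) ys b))
        (fun i => ν (us i)) (fun i => ν (vs i))

/-- The free variables of a formula. -/
def freeVars {k : ℕ} : TForm Sig rank k → Set ℕ
  | .lab _ x => {x}
  | .edg _ x y => {x, y}
  | .le x y => {x, y}
  | .eq x y => {x, y}
  | .not φ => freeVars φ
  | .and φ ψ => freeVars φ ∪ freeVars ψ
  | .or φ ψ => freeVars φ ∪ freeVars ψ
  | .ex x φ => freeVars φ \ {x}
  | .all x φ => freeVars φ \ {x}
  | .tc xs ys φ us vs =>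
      (freeVars φ \ (Set.range xs ∪ Set.range ys)) ∪ Set.range us ∪ Set.range vs

/-- Two `k`-tuples of variables consist of `2k` pairwise distinct variables. -/
def Distinct2 {k : ℕ} (xs ys : Fin k → ℕ) : Prop :=
  Function.Injective xs ∧ Function.Injective ys ∧ ∀ i j, xs i ≠ ys j

/-- `φ` is functional in the tuples of variables `xs`, `ys`: for every tree, every
valuation of the remaining variables, and every value of `xs`, there is at most one
value of `ys` satisfying `φ`. -/
def FunctionalIn {k : ℕ} (φ : TForm Sig rank k) (xs ys : Fin k → ℕ) : Prop :=
  ∀ (t : RTree Sig rank) (ν : ℕ → Pos t) (a b b' : Fin k → Pos t),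
    Sat t φ (updVec (updVec ν xs a) ys b) →
    Sat t φ (updVec (updVec ν xs a) ys b') → b = b'

/-- Well-formedness: in each transitive closure the `2k` bound variables are
pairwise distinct and occur free in the body. -/
def WF {k : ℕ} : TForm Sig rank k → Prop
  | .not φ => WF φ
  | .and φ ψ => WF φ ∧ WF ψ
  | .or φ ψ => WF φ ∧ WF ψ
  | .ex _ φ => WF φ
  | .all _ φ => WF φ
  | .tc xs ys φ _ _ =>
      Distinct2 xs ys ∧ (Set.range xs ∪ Set.range ys) ⊆ freeVars φ ∧ WF φ
  | _ => True

/-- All transitive closures occurring in the formula are deterministic, i.e., applied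
to functional formulas. -/
def DetTC {k : ℕ} : TForm Sig rank k → Prop
  | .not φ => DetTC φ
  | .and φ ψ => DetTC φ ∧ DetTC ψ
  | .or φ ψ => DetTC φ ∧ DetTC ψ
  | .ex _ φ => DetTC φ
  | .all _ φ => DetTC φ
  | .tc xs ys φ _ _ => FunctionalIn φ xs ys ∧ DetTC φ
  | _ => True

/-- All occurrences of transitive closure are positive (within the scope of an even
number of negations); the polarity parameter `b` is `true` for an even number. -/
def PosTC {k : ℕ} : Bool → TForm Sig rank k → Prop
  | b, .not φ => PosTC (!b) φ
  | b, .and φ ψ => PosTC b φ ∧ PosTC b ψ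
  | b, .or φ ψ => PosTC b φ ∧ PosTC b ψ
  | b, .ex _ φ => PosTC b φ
  | b, .all _ φ => PosTC b φ
  | b, .tc _ _ φ _ _ => b = true ∧ PosTC b φ
  | _, _ => True

/-- The formula contains no transitive closure operator (pure first-order). -/
def TCFree {k : ℕ} : TForm Sig rank k → Prop
  | .not φ => TCFree φ
  | .and φ ψ => TCFree φ ∧ TCFree ψ
  | .or φ ψ => TCFree φ ∧ TCFree ψ
  | .ex _ φ => TCFree φ
  | .all _ φ => TCFree φ
  | .tc _ _ _ _ _ => False
  | _ => True

/-- The tree language defined by a (closed) formula. -/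
def treesOf {k : ℕ} (φ : TForm Sig rank k) : Set (RTree Sig rank) :=
  {t | Sat t φ fun _ => rootPos t}

/-- `FO+DTC^k`: tree languages definable by closed first-order formulas with `k`-ary
deterministic transitive closure. -/
def FODTC (Sig : Type) (rank : Sig → ℕ) (k : ℕ) : Set (Set (RTree Sig rank)) :=
  {L | ∃ φ : TForm Sig rank k, WF φ ∧ DetTC φ ∧ freeVars φ = ∅ ∧ L = treesOf φ}

/-- `FO+TC^k`: tree languages definable by closed first-order formulas with `k`-ary
transitive closure. -/
def FOTC (Sig : Type) (rank : Sig → ℕ) (k : ℕ) : Set (Set (RTree Sig rank)) :=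
  {L | ∃ φ : TForm Sig rank k, WF φ ∧ freeVars φ = ∅ ∧ L = treesOf φ}

/-- `FO+posTC^k`: tree languages definable by closed first-order formulas in which
every occurrence of the `k`-ary transitive closure operator is positive. -/
def FOposTC (Sig : Type) (rank : Sig → ℕ) (k : ℕ) : Set (Set (RTree Sig rank)) :=
  {L | ∃ φ : TForm Sig rank k, WF φ ∧ PosTC true φ ∧ freeVars φ = ∅ ∧ L = treesOf φ}

/-!  ### k-head tree-walking automata with nested pebbles  -/

/-- Tests of a `k`-head tree-walking automaton with pebble set `X`:
label of the node under head `i`, presence of pebble `x` at head `i`, and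
child number of the node under head `i`. -/
inductive TTest (Sig : Type) (k : ℕ) (X : Type) : Type
  | lab (i : Fin k) (a : Sig)
  | peb (i : Fin k) (x : X)
  | chno (i : Fin k) (j : ℕ)

/-- Instructions: move head `i` up / down to the `j`-th child (1-based), drop a
pebble at head `i`, retrieve the most recently dropped pebble (from a distance),
or perform a positive (`b = true`) or negated (`b = false`) test. -/
inductive TInstr (Sig : Type) (k : ℕ) (X : Type) : Type
  | up (i : Fin k)
  | down (i : Fin k) (j : ℕ)
  | dropPeb (i : Fin k) (x : X)
  | retrieve (x : X)
  | test (b : Bool) (τ : TTest Sig k X)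

/-- A `k`-head tree-walking automaton with nested pebbles: a finite state set `Q`,
a finite pebble set `X`, an initial state, accepting states, and a finite set of
instructions `⟨p, χ, q⟩`. -/
structure TWA (Sig : Type) (rank : Sig → ℕ) (k : ℕ) : Type 1 where
  Q : Type
  finQ : Fintype Q
  X : Type
  finX : Fintype X
  q0 : Q
  acc : Set Q
  instr : Set (Q × TInstr Sig k X × Q)
  instrFin : instr.Finite

/-- Configurations: a state, the positions of the `k` heads, and the stack of
dropped pebbles with their positions (most recent first). -/
abbrev TConf {Sig : Type} {rank : Sig → ℕ} {k : ℕ} (A : TWA Sig rank k)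
    (t : RTree Sig rank) : Type :=
  A.Q × (Fin k → Pos t) × List (A.X × Pos t)

/-- Semantics of tests. -/
def testHolds {k : ℕ} (t : RTree Sig rank) {X : Type} (τ : TTest Sig k X)
    (hs : Fin k → Pos t) (π : List (X × Pos t)) : Prop :=
  match τ with
  | .lab i a => labelAt t (hs i).1 = some a
  | .peb i x => (x, hs i) ∈ π
  | .chno i j => childNo (hs i).1 = j

/-- Semantics of a single instruction, relating head positions and pebble stacks
before and after. -/
def instrStep {k : ℕ} (t : RTree Sig rank) {X : Type} (ins : TInstr Sig k X)
    (hs : Fin k → Pos t) (π : List (X × Pos t))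
    (hs' : Fin k → Pos t) (π' : List (X × Pos t)) : Prop :=
  match ins with
  | .up i => π' = π ∧ (∃ j : ℕ, (hs i).1 = (hs' i).1 ++ [j]) ∧ ∀ h, h ≠ i → hs' h = hs h
  | .down i j => π' = π ∧ 1 ≤ j ∧ (hs' i).1 = (hs i).1 ++ [j - 1] ∧ ∀ h, h ≠ i → hs' h = hs h
  | .dropPeb i x => hs' = hs ∧ π' = (x, hs i) :: π ∧ ∀ w, (x, w) ∉ π
  | .retrieve x => hs' = hs ∧ ∃ w, π = (x, w) :: π'
  | .test b τ => hs' = hs ∧ π' = π ∧ (testHolds t τ hs π ↔ b = true)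

/-- The step relation of automaton `A` on tree `t`. -/
def Step {k : ℕ} (A : TWA Sig rank k) (t : RTree Sig rank) :
    TConf A t → TConf A t → Prop :=
  fun c c' => ∃ ins : TInstr Sig k A.X,
    (c.1, ins, c'.1) ∈ A.instr ∧ instrStep t ins c.2.1 c.2.2 c'.2.1 c'.2.2

/-- `χ'` is the negation of the test `χ`. -/
def negOf {k : ℕ} {X : Type} (χ χ' : TInstr Sig k X) : Prop :=
  ∃ b τ, χ = TInstr.test b τ ∧ χ' = TInstr.test (!b) τ

/-- Determinism: any two distinct instructions with the same source state consist
of a test and its negation. -/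
def Deterministic {k : ℕ} (A : TWA Sig rank k) : Prop :=
  ∀ p χ₁ q₁ χ₂ q₂, (p, χ₁, q₁) ∈ A.instr → (p, χ₂, q₂) ∈ A.instr →
    (χ₁, q₁) ≠ (χ₂, q₂) → negOf χ₁ χ₂ ∨ negOf χ₂ χ₁

/-- The initial configuration: initial state, all heads at the root, no pebbles. -/
def initConf {k : ℕ} (A : TWA Sig rank k) (t : RTree Sig rank) : TConf A t :=
  (A.q0, fun _ => rootPos t, [])

/-- A configuration is halting if no step is possible from it. -/
def HaltingConf {k : ℕ} (A : TWA Sig rank k) (t : RTree Sig rank) (c : TConf A t) : Prop :=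
  ∀ c', ¬ Step A t c c'

/-- Acceptance: some computation from the initial configuration halts in an
accepting state with all heads at the root and no pebbles on the tree. -/
def Accepts {k : ℕ} (A : TWA Sig rank k) (t : RTree Sig rank) : Prop :=
  ∃ q ∈ A.acc,
    Relation.ReflTransGen (Step A t) (initConf A t) (q, fun _ => rootPos t, []) ∧
    HaltingConf A t (q, fun _ => rootPos t, [])

/-- The tree language accepted by `A`. -/
def Lang {k : ℕ} (A : TWA Sig rank k) : Set (RTree Sig rank) := {t | Accepts A t}

/-- The automaton uses no pebbles at all. -/
def PebbleFree {k : ℕ} (A : TWA Sig rank k) : Prop :=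
  ∀ p χ q, (p, χ, q) ∈ A.instr →
    (∀ i x, χ ≠ TInstr.dropPeb i x) ∧ (∀ x, χ ≠ TInstr.retrieve x) ∧
    (∀ b i x, χ ≠ TInstr.test b (TTest.peb i x))

/-- `DPTWA^k`: tree languages accepted by deterministic `k`-head tree-walking
automata with nested pebbles. -/
def DPTWA (Sig : Type) (rank : Sig → ℕ) (k : ℕ) : Set (Set (RTree Sig rank)) :=
  {L | ∃ A : TWA Sig rank k, Deterministic A ∧ L = Lang A}

/-- `NPTWA^k`: tree languages accepted by nondeterministic `k`-head tree-walking
automata with nested pebbles. -/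
def NPTWA (Sig : Type) (rank : Sig → ℕ) (k : ℕ) : Set (Set (RTree Sig rank)) :=
  {L | ∃ A : TWA Sig rank k, L = Lang A}

/-- `NTWA^k`: tree languages accepted by nondeterministic `k`-head tree-walking
automata without pebbles. -/
def NTWA (Sig : Type) (rank : Sig → ℕ) (k : ℕ) : Set (Set (RTree Sig rank)) :=
  {L | ∃ A : TWA Sig rank k, PebbleFree A ∧ L = Lang A}

end NestedPebbles

namespace NestedPebbles

variable {Sig : Type} {rank : Sig → ℕ} {k : ℕ}

/-- One step of the matrix `Φ` of formulas: from state `p` with head tuple `a` to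
state `q` with head tuple `b`, provided `φ_{p,q}(a,b)` holds (the remaining free
variables being valuated by `ν`). -/
def MStep {Q : Type} (Φ : Q → Q → TForm Sig rank k) (xs ys : Fin k → ℕ)
    (t : RTree Sig rank) (ν : ℕ → Pos t) :
    Q × (Fin k → Pos t) → Q × (Fin k → Pos t) → Prop :=
  fun c c' => Sat t (Φ c.1 c'.1) (updVec (updVec ν xs c.2) ys c'.2)

/-- The computation closure `Φ^#` of the matrix `Φ`, as a semantic relation:
`φ^#_{p,q}(ā,b̄)` holds iff there is a nonempty `Φ`-path from `(p,ā)` to `(q,b̄)`. -/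
def CompClosure {Q : Type} (Φ : Q → Q → TForm Sig rank k) (xs ys : Fin k → ℕ)
    (t : RTree Sig rank) (ν : ℕ → Pos t) (p q : Q) (a b : Fin k → Pos t) : Prop :=
  Relation.TransGen (MStep Φ xs ys t ν) (p, a) (q, b)

/-- The matrix `Φ` is deterministic: its entries are jointly functional and
exclusive. -/
def DetMatrix {Q : Type} (Φ : Q → Q → TForm Sig rank k) (xs ys : Fin k → ℕ) : Prop :=
  ∀ (t : RTree Sig rank) (ν : ℕ → Pos t) (p q q' : Q) (a b b' : Fin k → Pos t),
    Sat t (Φ p q) (updVec (updVec ν xs a) ys b) →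
    Sat t (Φ p q') (updVec (updVec ν xs a) ys b') → q = q' ∧ b = b'

/-- `q` is a final state of the matrix `Φ`: all entries `φ_{q,r}` are false. -/
def FinalState {Q : Type} (Φ : Q → Q → TForm Sig rank k) (xs ys : Fin k → ℕ)
    (q : Q) : Prop :=
  ∀ (r : Q) (t : RTree Sig rank) (ν : ℕ → Pos t) (a b : Fin k → Pos t),
    ¬ Sat t (Φ q r) (updVec (updVec ν xs a) ys b)

/-- `q` is a final state of the computation closure `Φ^#`: all entries
`φ^#_{q,r}` are false. -/
def FinalForClosure {Q : Type} (Φ : Q → Q → TForm Sig rank k) (xs ys : Fin k → ℕ)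
    (q : Q) : Prop :=
  ∀ (r : Q) (t : RTree Sig rank) (ν : ℕ → Pos t) (a b : Fin k → Pos t),
    ¬ CompClosure Φ xs ys t ν q r a b

end NestedPebbles

namespace NestedPebbles

variable {Sig : Type} {rank : Sig → ℕ} {k : ℕ}

section UpdVec

variable {α : Type} (ν : ℕ → α) (xs ys : Fin k → ℕ) (a b : Fin k → α)

theorem updVec_apply_mem (hinj : Function.Injective xs) (i : Fin k) :
    updVec ν xs a (xs i) = a i := by
  unfold updVec
  have h : ∃ j, xs j = xs i := ⟨i, rfl⟩
  rw [dif_pos h]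
  congr 1
  exact hinj h.choose_spec

theorem updVec_apply_not_mem {n : ℕ} (h : n ∉ Set.range xs) :
    updVec ν xs a n = ν n := by
  unfold updVec
  rw [dif_neg]
  rintro ⟨i, hi⟩
  exact h ⟨i, hi⟩

theorem updVec_absorb : updVec (updVec ν xs a) xs b = updVec ν xs b := by
  funext n
  unfold updVec
  by_cases h : ∃ i, xs i = n
  · rw [dif_pos h, dif_pos h]
  · rw [dif_neg h, dif_neg h, dif_neg h]

theorem updVec_comm (hdisj : ∀ i j, xs i ≠ ys j) :
    updVec (updVec ν xs a) ys b = updVec (updVec ν ys b) xs a := by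
  funext n
  by_cases hy : ∃ i, ys i = n
  · obtain ⟨i, rfl⟩ := hy
    have hx : (ys i) ∉ Set.range xs := by rintro ⟨j, hj⟩; exact hdisj j i hj
    rw [updVec_apply_not_mem _ _ _ hx]
    unfold updVec
    have h : ∃ j, ys j = ys i := ⟨i, rfl⟩
    rw [dif_pos h, dif_pos h]
  · rw [updVec_apply_not_mem _ _ _ (by rintro ⟨i, hi⟩; exact hy ⟨i, hi⟩)]
    unfold updVec
    by_cases hx : ∃ i, xs i = n
    · rw [dif_pos hx, dif_pos hx]
    · rw [dif_neg hx, dif_neg hx, dif_neg (by rintro ⟨i,hi⟩; exact hy ⟨i,hi⟩)]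

theorem updVec_updVec_absorb (c d : Fin k → α) (hdisj : ∀ i j, xs i ≠ ys j) :
    updVec (updVec (updVec (updVec ν xs a) ys b) xs c) ys d
      = updVec (updVec ν xs c) ys d := by
  rw [← updVec_comm (updVec ν xs a) xs ys c b hdisj, updVec_absorb ν xs a c,
    updVec_absorb (updVec ν xs c) ys b d]

end UpdVec

theorem freeVars_finite (φ : TForm Sig rank k) : (freeVars φ).Finite := by
  induction φ with
  | lab a x => exact Set.finite_singleton x
  | edg i x y => exact Set.Finite.insert x (Set.finite_singleton y)
  | le x y => exact Set.Finite.insert x (Set.finite_singleton y)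
  | eq x y => exact Set.Finite.insert x (Set.finite_singleton y)
  | not φ ih => exact ih
  | and φ ψ ih ih' => exact ih.union ih'
  | or φ ψ ih ih' => exact ih.union ih'
  | ex x φ ih => exact ih.diff
  | all x φ ih => exact ih.diff
  | tc xs ys φ us vs ih =>
      exact (ih.diff.union (Set.finite_range us)).union (Set.finite_range vs)

end NestedPebbles
namespace NestedPebbles

variable {Sig : Type} {rank : Sig → ℕ} {k : ℕ}

theorem updVec2_congr {α : Type} {ν ν' : ℕ → α} (xs ys : Fin k → ℕ)
    (a b : Fin k → α) {n : ℕ}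
    (h : n ∉ Set.range xs → n ∉ Set.range ys → ν n = ν' n) :
    updVec (updVec ν xs a) ys b n = updVec (updVec ν' xs a) ys b n := by
  unfold updVec
  by_cases hy : ∃ i, ys i = n
  · rw [dif_pos hy, dif_pos hy]
  · rw [dif_neg hy, dif_neg hy]
    by_cases hx : ∃ i, xs i = n
    · rw [dif_pos hx, dif_pos hx]
    · rw [dif_neg hx, dif_neg hx]
      exact h (by rintro ⟨i,hi⟩; exact hx ⟨i,hi⟩) (by rintro ⟨i,hi⟩; exact hy ⟨i,hi⟩)

theorem sat_congr (t : RTree Sig rank) (φ : TForm Sig rank k) :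
    ∀ {ν ν' : ℕ → Pos t}, (∀ n ∈ freeVars φ, ν n = ν' n) →
      (Sat t φ ν ↔ Sat t φ ν') := by
  induction φ with
  | lab a x =>
      intro ν ν' h
      simp only [Sat, h x (by simp [freeVars])]
  | edg i x y =>
      intro ν ν' h
      simp only [Sat, h x (by simp [freeVars]), h y (by simp [freeVars])]
  | le x y =>
      intro ν ν' h
      simp only [Sat, h x (by simp [freeVars]), h y (by simp [freeVars])]
  | eq x y =>
      intro ν ν' h
      simp only [Sat, h x (by simp [freeVars]), h y (by simp [freeVars])]
  | not φ ih =>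
      intro ν ν' h
      simp only [Sat]
      exact not_congr (ih h)
  | and φ ψ ih ih' =>
      intro ν ν' h
      simp only [Sat]
      exact and_congr (ih fun n hn => h n (Or.inl hn)) (ih' fun n hn => h n (Or.inr hn))
  | or φ ψ ih ih' =>
      intro ν ν' h
      simp only [Sat]
      exact or_congr (ih fun n hn => h n (Or.inl hn)) (ih' fun n hn => h n (Or.inr hn))
  | ex x φ ih =>
      intro ν ν' h
      simp only [Sat]
      refine exists_congr fun u => ih fun n hn => ?_
      by_cases hx : n = x
      · subst hx; simp
      · rw [Function.update_of_ne hx, Function.update_of_ne hx]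
        exact h n ⟨hn, hx⟩
  | all x φ ih =>
      intro ν ν' h
      simp only [Sat]
      refine forall_congr' fun u => ih fun n hn => ?_
      by_cases hx : n = x
      · subst hx; simp
      · rw [Function.update_of_ne hx, Function.update_of_ne hx]
        exact h n ⟨hn, hx⟩
  | tc xs ys φ us vs ih =>
      intro ν ν' h
      simp only [Sat]
      have hus : (fun i => ν (us i)) = fun i => ν' (us i) := by
        funext i
        exact h (us i) (Or.inl (Or.inr ⟨i, rfl⟩))
      have hvs : (fun i => ν (vs i)) = fun i => ν' (vs i) := by
        funext i
        exact h (vs i) (Or.inr ⟨i, rfl⟩)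
      have hrel : (fun a b : Fin k → Pos t => Sat t φ (updVec (updVec ν xs a) ys b))
          = fun a b => Sat t φ (updVec (updVec ν' xs a) ys b) := by
        funext a b
        refine propext (ih fun n hn => updVec2_congr xs ys a b fun hx hy => ?_)
        exact h n (Or.inl (Or.inl ⟨hn, fun hc => hc.elim hx hy⟩))
      rw [hus, hvs, hrel]

end NestedPebbles
namespace NestedPebbles

variable {Sig : Type} {rank : Sig → ℕ} {k : ℕ}

/-- Rename all variables (free and bound) of a formula by `σ`. -/
def renameV (σ : ℕ → ℕ) : TForm Sig rank k → TForm Sig rank k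
  | .lab a x => .lab a (σ x)
  | .edg i x y => .edg i (σ x) (σ y)
  | .le x y => .le (σ x) (σ y)
  | .eq x y => .eq (σ x) (σ y)
  | .not φ => .not (renameV σ φ)
  | .and φ ψ => .and (renameV σ φ) (renameV σ ψ)
  | .or φ ψ => .or (renameV σ φ) (renameV σ ψ)
  | .ex x φ => .ex (σ x) (renameV σ φ)
  | .all x φ => .all (σ x) (renameV σ φ)
  | .tc xs ys φ us vs => .tc (σ ∘ xs) (σ ∘ ys) (renameV σ φ) (σ ∘ us) (σ ∘ vs)

theorem choose_congr {α : Type} {P Q : α → Prop} (e : P = Q)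
    (hP : Exists P) (hQ : Exists Q) : hP.choose = hQ.choose := by
  subst e; rfl

theorem updVec_comp {α : Type} {σ : ℕ → ℕ} (hσ : Function.Injective σ)
    (ν : ℕ → α) (xs : Fin k → ℕ) (a : Fin k → α) :
    (fun n => updVec ν (σ ∘ xs) a (σ n)) = updVec (fun n => ν (σ n)) xs a := by
  funext n
  unfold updVec
  have e : (fun i => (σ ∘ xs) i = σ n) = fun i => xs i = n :=
    funext fun i => propext ⟨fun h => hσ h, fun h => congrArg σ h⟩
  by_cases h : ∃ i, xs i = n
  · have h' : ∃ i, (σ ∘ xs) i = σ n := ⟨h.choose, congrArg σ h.choose_spec⟩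
    rw [dif_pos h', dif_pos h]
    exact congrArg a (choose_congr e h' h)
  · have h' : ¬ ∃ i, (σ ∘ xs) i = σ n := by
      rintro ⟨i, hi⟩; exact h ⟨i, hσ hi⟩
    rw [dif_neg h', dif_neg h]

theorem update_comp {α : Type} {σ : ℕ → ℕ} (hσ : Function.Injective σ)
    (ν : ℕ → α) (x : ℕ) (u : α) :
    (fun n => Function.update ν (σ x) u (σ n)) = Function.update (fun n => ν (σ n)) x u := by
  funext n
  by_cases h : n = x
  · subst h; simp
  · rw [Function.update_of_ne (fun hc => h (hσ hc)), Function.update_of_ne h]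

theorem sat_renameV (t : RTree Sig rank) {σ : ℕ → ℕ} (hσ : Function.Injective σ)
    (φ : TForm Sig rank k) :
    ∀ ν : ℕ → Pos t, Sat t (renameV σ φ) ν ↔ Sat t φ (fun n => ν (σ n)) := by
  induction φ with
  | lab a x => intro ν; simp [renameV, Sat]
  | edg i x y => intro ν; simp [renameV, Sat]
  | le x y => intro ν; simp [renameV, Sat]
  | eq x y => intro ν; simp [renameV, Sat]
  | not φ ih => intro ν; simp only [renameV, Sat]; exact not_congr (ih ν)
  | and φ ψ ih ih' => intro ν; simp only [renameV, Sat]; exact and_congr (ih ν) (ih' ν)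
  | or φ ψ ih ih' => intro ν; simp only [renameV, Sat]; exact or_congr (ih ν) (ih' ν)
  | ex x φ ih =>
      intro ν
      simp only [renameV, Sat]
      refine exists_congr fun u => ?_
      rw [ih, update_comp hσ]
  | all x φ ih =>
      intro ν
      simp only [renameV, Sat]
      refine forall_congr' fun u => ?_
      rw [ih, update_comp hσ]
  | tc xs ys φ us vs ih =>
      intro ν
      simp only [renameV, Sat]
      have hrel : (fun a b : Fin k → Pos t =>
            Sat t (renameV σ φ) (updVec (updVec ν (σ ∘ xs) a) (σ ∘ ys) b))
          = fun a b => Sat t φ (updVec (updVec (fun n => ν (σ n)) xs a) ys b) := by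
        funext a b
        refine propext ?_
        rw [ih]
        have : (fun n => updVec (updVec ν (σ ∘ xs) a) (σ ∘ ys) b (σ n))
            = updVec (updVec (fun n => ν (σ n)) xs a) ys b := by
          rw [updVec_comp hσ (updVec ν (σ ∘ xs) a) ys b, updVec_comp hσ ν xs a]
        rw [this]
      rw [hrel]
      rfl

theorem freeVars_renameV {σ : ℕ → ℕ} (hσ : Function.Injective σ)
    (φ : TForm Sig rank k) :
    freeVars (renameV σ φ) = σ '' freeVars φ := by
  induction φ with
  | lab a x => simp [renameV, freeVars]
  | edg i x y => simp [renameV, freeVars, Set.image_insert_eq]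
  | le x y => simp [renameV, freeVars, Set.image_insert_eq]
  | eq x y => simp [renameV, freeVars, Set.image_insert_eq]
  | not φ ih => simpa [renameV, freeVars] using ih
  | and φ ψ ih ih' => simp [renameV, freeVars, ih, ih', Set.image_union]
  | or φ ψ ih ih' => simp [renameV, freeVars, ih, ih', Set.image_union]
  | ex x φ ih =>
      simp only [renameV, freeVars, ih]
      rw [← Set.image_singleton, ← Set.image_diff hσ]
  | all x φ ih =>
      simp only [renameV, freeVars, ih]
      rw [← Set.image_singleton, ← Set.image_diff hσ]
  | tc xs ys φ us vs ih =>
      simp only [renameV, freeVars, ih]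
      rw [Set.range_comp, Set.range_comp, Set.range_comp, Set.range_comp,
        ← Set.image_union, ← Set.image_diff hσ, ← Set.image_union, ← Set.image_union]

theorem distinct2_comp {σ : ℕ → ℕ} (hσ : Function.Injective σ)
    {xs ys : Fin k → ℕ} (h : Distinct2 xs ys) : Distinct2 (σ ∘ xs) (σ ∘ ys) := by
  obtain ⟨h1, h2, h3⟩ := h
  exact ⟨hσ.comp h1, hσ.comp h2, fun i j hc => h3 i j (hσ hc)⟩

theorem wf_renameV {σ : ℕ → ℕ} (hσ : Function.Injective σ)
    (φ : TForm Sig rank k) (h : WF φ) : WF (renameV σ φ) := by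
  induction φ with
  | lab a x => trivial
  | edg i x y => trivial
  | le x y => trivial
  | eq x y => trivial
  | not φ ih => exact ih h
  | and φ ψ ih ih' => exact ⟨ih h.1, ih' h.2⟩
  | or φ ψ ih ih' => exact ⟨ih h.1, ih' h.2⟩
  | ex x φ ih => exact ih h
  | all x φ ih => exact ih h
  | tc xs ys φ us vs ih =>
      obtain ⟨hd, hsub, hwf⟩ := h
      refine ⟨distinct2_comp hσ hd, ?_, ih hwf⟩
      rw [freeVars_renameV hσ, Set.range_comp, Set.range_comp, ← Set.image_union]
      exact Set.image_mono hsub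

end NestedPebbles
namespace NestedPebbles

variable {Sig : Type} {rank : Sig → ℕ} {k : ℕ}

/-! ### Swapping two tuples of variables -/

/-- The permutation of `ℕ` swapping the tuples `ys` and `zs`. -/
noncomputable def swapT (ys zs : Fin k → ℕ) : ℕ → ℕ := updVec (updVec id ys zs) zs ys

theorem swapT_left {ys zs : Fin k → ℕ} (hy : Function.Injective ys)
    (hdisj : ∀ i j, ys i ≠ zs j) (i : Fin k) : swapT ys zs (ys i) = zs i := by
  unfold swapT
  rw [updVec_apply_not_mem _ zs ys (by rintro ⟨j, hj⟩; exact hdisj i j hj.symm)]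
  exact updVec_apply_mem id ys zs hy i

theorem swapT_right {ys : Fin k → ℕ} {zs : Fin k → ℕ} (hz : Function.Injective zs)
    (i : Fin k) : swapT ys zs (zs i) = ys i :=
  updVec_apply_mem _ zs ys hz i

theorem swapT_other {ys zs : Fin k → ℕ} {n : ℕ} (hny : n ∉ Set.range ys)
    (hnz : n ∉ Set.range zs) : swapT ys zs n = n := by
  unfold swapT
  rw [updVec_apply_not_mem _ zs ys hnz, updVec_apply_not_mem _ ys zs hny]
  rfl

theorem swapT_involutive {ys zs : Fin k → ℕ} (hy : Function.Injective ys)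
    (hz : Function.Injective zs) (hdisj : ∀ i j, ys i ≠ zs j) :
    Function.Involutive (swapT ys zs) := by
  intro n
  by_cases hmy : ∃ i, ys i = n
  · obtain ⟨i, rfl⟩ := hmy
    rw [swapT_left hy hdisj, swapT_right hz]
  · by_cases hmz : ∃ i, zs i = n
    · obtain ⟨i, rfl⟩ := hmz
      rw [swapT_right hz, swapT_left hy hdisj]
    · have h := swapT_other (ys := ys) (zs := zs) (n := n)
        (by rintro ⟨i,hi⟩; exact hmy ⟨i,hi⟩) (by rintro ⟨i,hi⟩; exact hmz ⟨i,hi⟩)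
      rw [h]; exact h

theorem swapT_injective {ys zs : Fin k → ℕ} (hy : Function.Injective ys)
    (hz : Function.Injective zs) (hdisj : ∀ i j, ys i ≠ zs j) :
    Function.Injective (swapT ys zs) :=
  (swapT_involutive hy hz hdisj).injective

/-! ### Existential quantification over a tuple of variables -/

/-- Existential quantification over a tuple of variables. -/
def exVec : {m : ℕ} → (Fin m → ℕ) → TForm Sig rank k → TForm Sig rank k
  | 0, _, φ => φ
  | _+1, zsv, φ => .ex (zsv 0) (exVec (fun i => zsv i.succ) φ)

theorem updVec_zero {α : Type} (ν : ℕ → α) (zs : Fin 0 → ℕ) (c : Fin 0 → α) :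
    updVec ν zs c = ν := by
  funext n
  exact updVec_apply_not_mem ν zs c (by rintro ⟨i, _⟩; exact i.elim0)

theorem updVec_cons {α : Type} {m : ℕ} (zs : Fin (m+1) → ℕ)
    (hz : Function.Injective zs) (ν : ℕ → α) (u : α) (c : Fin m → α) :
    updVec (Function.update ν (zs 0) u) (fun i : Fin m => zs i.succ) c
      = updVec ν zs (Fin.cons u c) := by
  funext n
  by_cases h : ∃ i : Fin m, zs i.succ = n
  · obtain ⟨i, rfl⟩ := h
    rw [updVec_apply_mem _ _ c
        (fun i j hij => Fin.succ_injective _ (hz hij)) i]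
    have : zs i.succ ∈ Set.range zs := ⟨i.succ, rfl⟩
    rw [updVec_apply_mem ν zs (Fin.cons u c) hz i.succ]
    simp
  · by_cases h0 : n = zs 0
    · subst h0
      rw [updVec_apply_not_mem _ _ c
        (by rintro ⟨i, hi⟩; exact h ⟨i, hi⟩)]
      rw [Function.update_self, updVec_apply_mem ν zs (Fin.cons u c) hz 0]
      simp
    · rw [updVec_apply_not_mem _ _ c (by rintro ⟨i, hi⟩; exact h ⟨i, hi⟩),
        Function.update_of_ne h0,
        updVec_apply_not_mem ν zs (Fin.cons u c) ?_]
      rintro ⟨j, hj⟩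
      rcases Fin.eq_zero_or_eq_succ j with rfl | ⟨i, rfl⟩
      · exact h0 hj.symm
      · exact h ⟨i, hj⟩

theorem sat_exVec (t : RTree Sig rank) :
    ∀ {m : ℕ} (zsv : Fin m → ℕ), Function.Injective zsv →
    ∀ (φ : TForm Sig rank k) (ν : ℕ → Pos t),
      (Sat t (exVec zsv φ) ν ↔ ∃ c : Fin m → Pos t, Sat t φ (updVec ν zsv c)) := by
  intro m
  induction m with
  | zero =>
      intro zsv _ φ ν
      constructor
      · exact fun h => ⟨Fin.elim0, by rwa [updVec_zero]⟩
      · rintro ⟨c, h⟩; rwa [updVec_zero] at h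
  | succ m ih =>
      intro zsv hz φ ν
      have htail : Function.Injective (fun i : Fin m => zsv i.succ) :=
        fun i j hij => Fin.succ_injective _ (hz hij)
      show (∃ u : Pos t, Sat t (exVec (fun i : Fin m => zsv i.succ) φ)
        (Function.update ν (zsv 0) u)) ↔ _
      constructor
      · rintro ⟨u, hu⟩
        obtain ⟨c', hc'⟩ := (ih _ htail φ _).1 hu
        rw [updVec_cons zsv hz] at hc'
        exact ⟨Fin.cons u c', hc'⟩
      · rintro ⟨c, hc⟩
        refine ⟨c 0, (ih _ htail φ _).2 ⟨fun i => c i.succ, ?_⟩⟩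
        rw [updVec_cons zsv hz]
        rwa [show (Fin.cons (c 0) (fun i => c i.succ)) = c from Fin.cons_self_tail c]

theorem freeVars_exVec :
    ∀ {m : ℕ} (zsv : Fin m → ℕ) (φ : TForm Sig rank k),
      freeVars (exVec zsv φ) = freeVars φ \ Set.range zsv := by
  intro m
  induction m with
  | zero =>
      intro zsv φ
      simp [exVec, Set.range_eq_empty]
  | succ m ih =>
      intro zsv φ
      show freeVars (exVec (fun i : Fin m => zsv i.succ) φ) \ {zsv 0} = _
      rw [ih, Set.diff_diff]
      congr 1
      ext n
      constructor
      · rintro (⟨i, rfl⟩ | h)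
        · exact ⟨i.succ, rfl⟩
        · simp at h; exact ⟨0, h.symm⟩
      · rintro ⟨j, rfl⟩
        rcases Fin.eq_zero_or_eq_succ j with rfl | ⟨i, rfl⟩
        · right; rfl
        · left; exact ⟨i, rfl⟩

theorem wf_exVec :
    ∀ {m : ℕ} (zsv : Fin m → ℕ) (φ : TForm Sig rank k), WF φ → WF (exVec zsv φ) := by
  intro m
  induction m with
  | zero => intro _ _ h; exact h
  | succ m ih => intro zsv φ h; exact ih _ φ h

/-! ### Padding a formula with trivially true atoms -/

/-- Conjoin trivially true equalities to make the listed variables free. -/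
def padL (l : List ℕ) (φ : TForm Sig rank k) : TForm Sig rank k :=
  l.foldr (fun x ψ => TForm.and ψ (.eq x x)) φ

theorem sat_padL (t : RTree Sig rank) (l : List ℕ) (φ : TForm Sig rank k)
    (ν : ℕ → Pos t) : Sat t (padL l φ) ν ↔ Sat t φ ν := by
  induction l with
  | nil => exact Iff.rfl
  | cons x l ih =>
      show Sat t (padL l φ) ν ∧ ν x = ν x ↔ _
      simp [ih]

theorem freeVars_padL (l : List ℕ) (φ : TForm Sig rank k) :
    freeVars (padL l φ) = freeVars φ ∪ {x | x ∈ l} := by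
  induction l with
  | nil => simp [padL]
  | cons x l ih =>
      show freeVars (padL l φ) ∪ {x, x} = _
      rw [ih]
      ext n
      simp [List.mem_cons]
      tauto

theorem wf_padL (l : List ℕ) (φ : TForm Sig rank k) (h : WF φ) : WF (padL l φ) := by
  induction l with
  | nil => exact h
  | cons x l ih => exact ⟨ih, trivial⟩

end NestedPebbles
namespace NestedPebbles

variable {Sig : Type} {rank : Sig → ℕ} {k : ℕ}

/-! ### Star (reflexive-transitive closure) of a formula in context `(xs, ys)` -/

theorem sat_starF (t : RTree Sig rank) {xs ys : Fin k → ℕ} (hd : Distinct2 xs ys)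
    (φ : TForm Sig rank k) (ν : ℕ → Pos t) (a b : Fin k → Pos t) :
    Sat t (TForm.tc xs ys φ xs ys) (updVec (updVec ν xs a) ys b) ↔
      Relation.ReflTransGen
        (fun c d => Sat t φ (updVec (updVec ν xs c) ys d)) a b := by
  obtain ⟨hx, hy, hxy⟩ := hd
  show Relation.ReflTransGen _ _ _ ↔ _
  have ea : (fun i => updVec (updVec ν xs a) ys b (xs i)) = a := by
    funext i
    rw [updVec_apply_not_mem _ ys b (by rintro ⟨j, hj⟩; exact hxy i j hj.symm),
      updVec_apply_mem _ xs a hx]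
  have eb : (fun i => updVec (updVec ν xs a) ys b (ys i)) = b := by
    funext i
    rw [updVec_apply_mem _ ys b hy]
  have erel : (fun c d : Fin k → Pos t =>
        Sat t φ (updVec (updVec (updVec (updVec ν xs a) ys b) xs c) ys d))
      = fun c d => Sat t φ (updVec (updVec ν xs c) ys d) := by
    funext c d
    rw [updVec_updVec_absorb ν xs ys a b c d hxy]
  rw [ea, eb, erel]

/-! ### Composition of two formulas in context `(xs, ys)` -/

/-- Composition `∃z̄. φ(x̄,z̄) ∧ ψ(z̄,ȳ)` of two formulas in context `(xs, ys)`,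
using the fresh tuple `zs`. -/
noncomputable def compF (xs ys zs : Fin k → ℕ) (φ ψ : TForm Sig rank k) :
    TForm Sig rank k :=
  exVec zs (TForm.and (renameV (swapT ys zs) φ) (renameV (swapT xs zs) ψ))

theorem sat_compF (t : RTree Sig rank) {xs ys zs : Fin k → ℕ}
    (hd : Distinct2 xs ys) (hz : Function.Injective zs)
    (hzx : ∀ i j, zs i ≠ xs j) (hzy : ∀ i j, zs i ≠ ys j)
    (φ ψ : TForm Sig rank k)
    (hfφ : ∀ i, zs i ∉ freeVars φ) (hfψ : ∀ i, zs i ∉ freeVars ψ)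
    (ν : ℕ → Pos t) (a b : Fin k → Pos t) :
    Sat t (compF xs ys zs φ ψ) (updVec (updVec ν xs a) ys b) ↔
      ∃ c, Sat t φ (updVec (updVec ν xs a) ys c) ∧
        Sat t ψ (updVec (updVec ν xs c) ys b) := by
  obtain ⟨hx, hy, hxy⟩ := hd
  have hdyz : ∀ i j, ys i ≠ zs j := fun i j h => hzy j i h.symm
  have hdxz : ∀ i j, xs i ≠ zs j := fun i j h => hzx j i h.symm
  unfold compF
  rw [sat_exVec t zs hz]
  refine exists_congr fun c => ?_
  show Sat t (renameV (swapT ys zs) φ) _ ∧ Sat t (renameV (swapT xs zs) ψ) _ ↔ _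
  set μ' := updVec (updVec (updVec ν xs a) ys b) zs c with hμ'
  constructor <;> intro h <;> refine ⟨?_, ?_⟩
  · -- φ direction →
    have h1 := (sat_renameV t (swapT_injective hy hz hdyz) φ _).1 h.1
    refine (sat_congr t φ ?_).1 h1
    intro n hn
    have hnz : n ∉ Set.range zs := by rintro ⟨i, rfl⟩; exact hfφ i hn
    by_cases hny : ∃ i, ys i = n
    · obtain ⟨i, rfl⟩ := hny
      rw [swapT_left hy hdyz, hμ', updVec_apply_mem _ zs c hz, updVec_apply_mem _ ys c hy]
    · have hny' : n ∉ Set.range ys := by rintro ⟨i, hi⟩; exact hny ⟨i, hi⟩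
      rw [swapT_other hny' hnz, hμ', updVec_apply_not_mem _ zs c hnz,
        updVec_apply_not_mem _ ys b hny', updVec_apply_not_mem _ ys c hny']
  · -- ψ direction →
    have h1 := (sat_renameV t (swapT_injective hx hz hdxz) ψ _).1 h.2
    refine (sat_congr t ψ ?_).1 h1
    intro n hn
    have hnz : n ∉ Set.range zs := by rintro ⟨i, rfl⟩; exact hfψ i hn
    by_cases hnx : ∃ i, xs i = n
    · obtain ⟨i, rfl⟩ := hnx
      have hxiy : xs i ∉ Set.range ys := by rintro ⟨j, hj⟩; exact hxy i j hj.symm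
      rw [swapT_left hx hdxz, hμ', updVec_apply_mem _ zs c hz,
        updVec_apply_not_mem _ ys b hxiy, updVec_apply_mem _ xs c hx]
    · have hnx' : n ∉ Set.range xs := by rintro ⟨i, hi⟩; exact hnx ⟨i, hi⟩
      rw [swapT_other hnx' hnz, hμ', updVec_apply_not_mem _ zs c hnz]
      by_cases hny : ∃ i, ys i = n
      · obtain ⟨i, rfl⟩ := hny
        rw [updVec_apply_mem _ ys b hy, updVec_apply_mem _ ys b hy]
      · have hny' : n ∉ Set.range ys := by rintro ⟨i, hi⟩; exact hny ⟨i, hi⟩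
        rw [updVec_apply_not_mem _ ys b hny', updVec_apply_not_mem _ xs a hnx',
          updVec_apply_not_mem _ ys b hny', updVec_apply_not_mem _ xs c hnx']
  · -- φ direction ←
    rw [sat_renameV t (swapT_injective hy hz hdyz) φ _]
    refine (sat_congr t φ ?_).2 h.1
    intro n hn
    have hnz : n ∉ Set.range zs := by rintro ⟨i, rfl⟩; exact hfφ i hn
    by_cases hny : ∃ i, ys i = n
    · obtain ⟨i, rfl⟩ := hny
      rw [swapT_left hy hdyz, hμ', updVec_apply_mem _ zs c hz, updVec_apply_mem _ ys c hy]
    · have hny' : n ∉ Set.range ys := by rintro ⟨i, hi⟩; exact hny ⟨i, hi⟩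
      rw [swapT_other hny' hnz, hμ', updVec_apply_not_mem _ zs c hnz,
        updVec_apply_not_mem _ ys b hny', updVec_apply_not_mem _ ys c hny']
  · -- ψ direction ←
    rw [sat_renameV t (swapT_injective hx hz hdxz) ψ _]
    refine (sat_congr t ψ ?_).2 h.2
    intro n hn
    have hnz : n ∉ Set.range zs := by rintro ⟨i, rfl⟩; exact hfψ i hn
    by_cases hnx : ∃ i, xs i = n
    · obtain ⟨i, rfl⟩ := hnx
      have hxiy : xs i ∉ Set.range ys := by rintro ⟨j, hj⟩; exact hxy i j hj.symm
      rw [swapT_left hx hdxz, hμ', updVec_apply_mem _ zs c hz,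
        updVec_apply_not_mem _ ys b hxiy, updVec_apply_mem _ xs c hx]
    · have hnx' : n ∉ Set.range xs := by rintro ⟨i, hi⟩; exact hnx ⟨i, hi⟩
      rw [swapT_other hnx' hnz, hμ', updVec_apply_not_mem _ zs c hnz]
      by_cases hny : ∃ i, ys i = n
      · obtain ⟨i, rfl⟩ := hny
        rw [updVec_apply_mem _ ys b hy, updVec_apply_mem _ ys b hy]
      · have hny' : n ∉ Set.range ys := by rintro ⟨i, hi⟩; exact hny ⟨i, hi⟩
        rw [updVec_apply_not_mem _ ys b hny', updVec_apply_not_mem _ xs a hnx',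
          updVec_apply_not_mem _ ys b hny', updVec_apply_not_mem _ xs c hnx']

theorem freeVars_compF {xs ys zs : Fin k → ℕ}
    (hx : Function.Injective xs) (hy : Function.Injective ys)
    (hz : Function.Injective zs)
    (hzx : ∀ i j, zs i ≠ xs j) (hzy : ∀ i j, zs i ≠ ys j)
    (φ ψ : TForm Sig rank k) :
    freeVars (compF xs ys zs φ ψ)
      = (swapT ys zs '' freeVars φ ∪ swapT xs zs '' freeVars ψ) \ Set.range zs := by
  unfold compF
  rw [freeVars_exVec]
  show (freeVars (renameV (swapT ys zs) φ) ∪ freeVars (renameV (swapT xs zs) ψ))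
      \ Set.range zs = _
  rw [freeVars_renameV (swapT_injective hy hz fun i j h => hzy j i h.symm),
    freeVars_renameV (swapT_injective hx hz fun i j h => hzx j i h.symm)]

theorem wf_compF {xs ys zs : Fin k → ℕ}
    (hx : Function.Injective xs) (hy : Function.Injective ys)
    (hz : Function.Injective zs)
    (hzx : ∀ i j, zs i ≠ xs j) (hzy : ∀ i j, zs i ≠ ys j)
    (φ ψ : TForm Sig rank k) (hφ : WF φ) (hψ : WF ψ) :
    WF (compF xs ys zs φ ψ) :=
  wf_exVec _ _ ⟨wf_renameV (swapT_injective hy hz fun i j h => hzy j i h.symm) φ hφ,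
    wf_renameV (swapT_injective hx hz fun i j h => hzx j i h.symm) ψ hψ⟩

end NestedPebbles
namespace NestedPebbles

section Via

variable {k : ℕ} {Q P : Type}

/-- Nonempty `M`-paths from `(p,a)` to `(q,b)` whose intermediate states lie in `S`. -/
inductive Via (M : Q → Q → (Fin k → P) → (Fin k → P) → Prop) (S : Q → Prop) :
    Q → (Fin k → P) → Q → (Fin k → P) → Prop
  | single {p q a b} : M p q a b → Via M S p a q b
  | cons {p r q a c b} : M p r a c → S r → Via M S r c q b → Via M S p a q b

theorem via_mono {M : Q → Q → (Fin k → P) → (Fin k → P) → Prop} {S S' : Q → Prop}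
    (hS : ∀ x, S x → S' x) {p a q b} (h : Via M S p a q b) : Via M S' p a q b := by
  induction h with
  | single h => exact .single h
  | cons h hr _ ih => exact .cons h (hS _ hr) ih

theorem via_trans {M : Q → Q → (Fin k → P) → (Fin k → P) → Prop} {S : Q → Prop} :
    ∀ {p a r c}, Via M S p a r c → S r → ∀ {q b}, Via M S r c q b → Via M S p a q b := by
  intro p a r c h1
  induction h1 with
  | single h => intro hr q b h2; exact .cons h hr h2
  | cons h hs _ ih => intro hr q b h2; exact .cons h hs (ih hr h2)

theorem via_empty {M : Q → Q → (Fin k → P) → (Fin k → P) → Prop} {S : Q → Prop}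
    (hS : ∀ x, ¬ S x) {p a q b} : Via M S p a q b ↔ M p q a b := by
  constructor
  · intro h
    cases h with
    | single h => exact h
    | cons h hr _ => exact absurd hr (hS _)
  · exact .single

theorem via_insert {M : Q → Q → (Fin k → P) → (Fin k → P) → Prop} {S : Q → Prop}
    {r : Q} {p a q b} :
    Via M (fun x => x = r ∨ S x) p a q b ↔
      Via M S p a q b ∨ ∃ c d, Via M S p a r c ∧
        Relation.ReflTransGen (fun c d => Via M S r c r d) c d ∧ Via M S r d q b := by
  constructor
  · intro h
    induction h with
    | single h => exact Or.inl (.single h)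
    | cons h hS' _ ih =>
        rcases hS' with rfl | hS'
        · rcases ih with h1 | ⟨e, f, v1, rtg, v3⟩
          · exact Or.inr ⟨_, _, .single h, .refl, h1⟩
          · exact Or.inr ⟨_, f, .single h, (Relation.ReflTransGen.single v1).trans rtg, v3⟩
        · rcases ih with h1 | ⟨e, f, v1, rtg, v3⟩
          · exact Or.inl (.cons h hS' h1)
          · exact Or.inr ⟨e, f, .cons h hS' v1, rtg, v3⟩
  · rintro (h | ⟨c, d, v1, rtg, v3⟩)
    · exact via_mono (fun x hx => Or.inr hx) h
    · have hr' : (fun x => x = r ∨ S x) r := Or.inl rfl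
      have v1' : Via M (fun x => x = r ∨ S x) p a r c :=
        via_mono (fun x hx => Or.inr hx) v1
      have v2 : ∀ {e}, Relation.ReflTransGen (fun c d => Via M S r c r d) c e →
          Via M (fun x => x = r ∨ S x) p a r e := by
        intro e rtg'
        induction rtg' with
        | refl => exact v1'
        | tail _ step ih => exact via_trans ih hr' (via_mono (fun x hx => Or.inr hx) step)
      exact via_trans (v2 rtg) hr' (via_mono (fun x hx => Or.inr hx) v3)

theorem via_univ {M : Q → Q → (Fin k → P) → (Fin k → P) → Prop} {S : Q → Prop}
    (hS : ∀ x, S x) {p a q b} :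
    Via M S p a q b ↔
      Relation.TransGen (fun c c' : Q × (Fin k → P) => M c.1 c'.1 c.2 c'.2) (p, a) (q, b) := by
  constructor
  · intro h
    induction h with
    | single h => exact .single h
    | cons h _ _ ih => exact .head h ih
  · intro h
    refine Relation.TransGen.head_induction_on
      (motive := fun c (_ : Relation.TransGen _ c ((q, b) : Q × (Fin k → P))) =>
        Via M S c.1 c.2 q b) h ?_ ?_
    · intro c hc
      exact .single hc
    · intro c c' h' _ ih
      exact .cons h' (hS _) ih

end Via

variable {Sig : Type} {rank : Sig → ℕ} {k : ℕ}

/-- The state-elimination (McNaughton–Yamada) matrix: entry `(p,q)` of `Wmat … l`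
defines the nonempty `Φ`-paths from `p` to `q` with intermediate states in `l`. -/
noncomputable def Wmat {Q : Type} (Φ : Q → Q → TForm Sig rank k)
    (xs ys zs : Fin k → ℕ) : List Q → Q → Q → TForm Sig rank k
  | [], p, q => padL (List.ofFn xs ++ List.ofFn ys) (Φ p q)
  | r :: l, p, q => .or (Wmat Φ xs ys zs l p q)
      (compF xs ys zs (Wmat Φ xs ys zs l p r)
        (compF xs ys zs (TForm.tc xs ys (Wmat Φ xs ys zs l r r) xs ys)
          (Wmat Φ xs ys zs l r q)))

theorem wmat_spec {Q : Type} (Φ : Q → Q → TForm Sig rank k)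
    (xs ys zs : Fin k → ℕ) (hd : Distinct2 xs ys) (hz : Function.Injective zs)
    (hzx : ∀ i j, zs i ≠ xs j) (hzy : ∀ i j, zs i ≠ ys j)
    (hzf : ∀ i p q, zs i ∉ freeVars (Φ p q)) (hwf : ∀ p q, WF (Φ p q)) :
    ∀ (l : List Q) (p q : Q),
      WF (Wmat Φ xs ys zs l p q) ∧
      (Set.range xs ∪ Set.range ys ⊆ freeVars (Wmat Φ xs ys zs l p q)) ∧
      (∀ i, zs i ∉ freeVars (Wmat Φ xs ys zs l p q)) ∧
      ∀ (t : RTree Sig rank) (ν : ℕ → Pos t) (a b : Fin k → Pos t),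
        (Sat t (Wmat Φ xs ys zs l p q) (updVec (updVec ν xs a) ys b) ↔
          Via (fun p q a b => Sat t (Φ p q) (updVec (updVec ν xs a) ys b))
            (fun x => x ∈ l) p a q b) := by
  obtain ⟨hx, hy, hxy⟩ := hd
  intro l
  induction l with
  | nil =>
      intro p q
      have hW0 : Wmat Φ xs ys zs [] p q
          = padL (List.ofFn xs ++ List.ofFn ys) (Φ p q) := rfl
      rw [hW0]
      refine ⟨wf_padL _ _ (hwf p q), ?_, ?_, ?_⟩
      · rw [freeVars_padL]
        rintro n (⟨i, rfl⟩ | ⟨i, rfl⟩)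
        · refine Or.inr ?_
          simp only [Set.mem_setOf_eq, List.mem_append, List.mem_ofFn]
          exact Or.inl ⟨i, rfl⟩
        · refine Or.inr ?_
          simp only [Set.mem_setOf_eq, List.mem_append, List.mem_ofFn]
          exact Or.inr ⟨i, rfl⟩
      · intro i hi
        rw [freeVars_padL] at hi
        rcases hi with hi | hi
        · exact hzf i p q hi
        · simp [List.mem_ofFn] at hi
          rcases hi with ⟨j, hj⟩ | ⟨j, hj⟩
          · exact hzx i j hj.symm
          · exact hzy i j hj.symm
      · intro t ν a b
        rw [sat_padL, via_empty (by simp)]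
  | cons r l ih =>
      intro p q
      have wf_tc : WF (TForm.tc xs ys (Wmat Φ xs ys zs l r r) xs ys) :=
        ⟨⟨hx, hy, hxy⟩, (ih r r).2.1, (ih r r).1⟩
      have hz_tc : ∀ i, zs i ∉ freeVars (TForm.tc xs ys (Wmat Φ xs ys zs l r r) xs ys) := by
        intro i hi
        rcases hi with (⟨hi, _⟩ | ⟨j, hj⟩) | ⟨j, hj⟩
        · exact (ih r r).2.2.1 i hi
        · exact hzx i j hj.symm
        · exact hzy i j hj.symm
      have hz_inner : ∀ i, zs i ∉ freeVars (compF xs ys zs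
          (TForm.tc xs ys (Wmat Φ xs ys zs l r r) xs ys) (Wmat Φ xs ys zs l r q)) := by
        intro i hi
        rw [freeVars_compF hx hy hz hzx hzy] at hi
        exact hi.2 ⟨i, rfl⟩
      refine ⟨⟨(ih p q).1, wf_compF hx hy hz hzx hzy _ _ (ih p r).1
          (wf_compF hx hy hz hzx hzy _ _ wf_tc (ih r q).1)⟩, ?_, ?_, ?_⟩
      · intro n hn
        exact Or.inl ((ih p q).2.1 hn)
      · intro i hi
        rcases hi with hi | hi
        · exact (ih p q).2.2.1 i hi
        · rw [freeVars_compF hx hy hz hzx hzy] at hi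
          exact hi.2 ⟨i, rfl⟩
      · intro t ν a b
        have key : Sat t (Wmat Φ xs ys zs (r :: l) p q) (updVec (updVec ν xs a) ys b) ↔
            Sat t (Wmat Φ xs ys zs l p q) (updVec (updVec ν xs a) ys b) ∨
            ∃ c, Sat t (Wmat Φ xs ys zs l p r) (updVec (updVec ν xs a) ys c) ∧
              ∃ d, Relation.ReflTransGen
                  (fun c d => Sat t (Wmat Φ xs ys zs l r r) (updVec (updVec ν xs c) ys d)) c d ∧
                Sat t (Wmat Φ xs ys zs l r q) (updVec (updVec ν xs d) ys b) := by
          show Sat t (Wmat Φ xs ys zs l p q) _ ∨ Sat t (compF _ _ _ _ _) _ ↔ _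
          refine or_congr Iff.rfl ?_
          rw [sat_compF t ⟨hx, hy, hxy⟩ hz hzx hzy _ _ ((ih p r).2.2.1) hz_inner]
          refine exists_congr fun c => and_congr Iff.rfl ?_
          rw [sat_compF t ⟨hx, hy, hxy⟩ hz hzx hzy _ _ hz_tc ((ih r q).2.2.1)]
          refine exists_congr fun d => and_congr ?_ Iff.rfl
          exact sat_starF t ⟨hx, hy, hxy⟩ _ ν c d
        rw [key]
        have eS : (fun x => x ∈ r :: l) = fun x => x = r ∨ x ∈ l :=
          funext fun x => propext List.mem_cons
        rw [eS, via_insert]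
        refine or_congr ((ih p q).2.2.2 t ν a b) ?_
        constructor
        · rintro ⟨c, h1, d, rtg, h3⟩
          refine ⟨c, d, ((ih p r).2.2.2 t ν a c).1 h1, ?_, ((ih r q).2.2.2 t ν d b).1 h3⟩
          exact Relation.ReflTransGen.mono (fun c d h => ((ih r r).2.2.2 t ν c d).1 h) _ _ rtg
        · rintro ⟨c, d, h1, rtg, h3⟩
          refine ⟨c, ((ih p r).2.2.2 t ν a c).2 h1, d, ?_, ((ih r q).2.2.2 t ν d b).2 h3⟩
          exact Relation.ReflTransGen.mono (fun c d h => ((ih r r).2.2.2 t ν c d).2 h) _ _ rtg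

end NestedPebbles

namespace NestedPebbles

/-- Lemma 2(2). If every entry of the matrix `Φ` is a formula of
`FO+TC^k`, then every entry of the computation closure `Φ^#` is expressible in
`FO+TC^k`: there is a matrix `Ψ` of (well-formed) `FO+TC^k` formulas whose
semantics is exactly the computation-closure relation of `Φ`. -/
theorem compClosure_in_FOTC (Sig : Type) [Fintype Sig] (rank : Sig → ℕ)
    (k : ℕ) (hk : 1 ≤ k) (Q : Type) [Fintype Q]
    (Φ : Q → Q → TForm Sig rank k) (xs ys : Fin k → ℕ)
    (hdist : Distinct2 xs ys) (hwf : ∀ p q, WF (Φ p q)) :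
    ∃ Ψ : Q → Q → TForm Sig rank k,
      (∀ p q, WF (Ψ p q)) ∧
      ∀ (p q : Q) (t : RTree Sig rank) (ν : ℕ → Pos t) (a b : Fin k → Pos t),
        Sat t (Ψ p q) (updVec (updVec ν xs a) ys b) ↔
          CompClosure Φ xs ys t ν p q a b := by
  classical
  have hF : ((Set.range xs ∪ Set.range ys) ∪
      ⋃ (p : Q) (q : Q), freeVars (Φ p q)).Finite := by
    refine ((Set.finite_range xs).union (Set.finite_range ys)).union ?_
    exact Set.finite_iUnion fun p => Set.finite_iUnion fun q => freeVars_finite (Φ p q)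
  obtain ⟨N, hN⟩ := hF.bddAbove
  let zs : Fin k → ℕ := fun i => N + 1 + i.val
  have hfr : ∀ (i : Fin k) (n : ℕ), n ∈ (Set.range xs ∪ Set.range ys) ∪
      ⋃ (p : Q) (q : Q), freeVars (Φ p q) → zs i ≠ n := by
    intro i n hn heq
    have h1 : n ≤ N := hN hn
    have h2 : zs i = N + 1 + i.val := rfl
    omega
  have hz : Function.Injective zs := by
    intro i j h
    have h' : N + 1 + (i : ℕ) = N + 1 + (j : ℕ) := h
    exact Fin.ext (by omega)
  have hzx : ∀ i j, zs i ≠ xs j := fun i j =>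
    hfr i (xs j) (Set.mem_union_left _ (Set.mem_union_left _ ⟨j, rfl⟩))
  have hzy : ∀ i j, zs i ≠ ys j := fun i j =>
    hfr i (ys j) (Set.mem_union_left _ (Set.mem_union_right _ ⟨j, rfl⟩))
  have hzf : ∀ i p q, zs i ∉ freeVars (Φ p q) := fun i p q hmem =>
    hfr i (zs i)
      (Set.mem_union_right _ (Set.mem_iUnion.2 ⟨p, Set.mem_iUnion.2 ⟨q, hmem⟩⟩)) rfl
  have spec := wmat_spec Φ xs ys zs hdist hz hzx hzy hzf hwf (Finset.univ.toList)
  refine ⟨fun p q => Wmat Φ xs ys zs Finset.univ.toList p q,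
    fun p q => (spec p q).1, ?_⟩
  intro p q t ν a b
  rw [(spec p q).2.2.2 t ν a b,
    via_univ (fun x => by simp [Finset.mem_toList])]
  exact Iff.rfl

end NestedPebbles
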